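/- A polynomial p in x = (x_1,...,x_g) and h = (h_1,...,h_g) is the nc directional derivative of some nc analytic polynomial if and only if every monomial of p has degree exactly one in h and, whenever a monomial m occurs in p, every monomial 1-differentially wed to m also occurs in p with the same coefficient. -/

import Mathlib

open scoped Classical


/-- Letters: `Sum.inl i` is the variable `x_i`, `Sum.inr i` the direction variable `h_i`. -/
abbrev AV (g : ℕ) := Fin g ⊕ Fin g

/-- Forget the `h`-marking of a letter (`h_i ↦ x_i`). -/
def flatA {g : ℕ} : AV g → Fin g := Sum.elim id id

/-- The monomial `w` has degree exactly one in `h`. -/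
def OneH {g : ℕ} (w : FreeMonoid (AV g)) : Prop :=
  (FreeMonoid.toList w).countP (fun a : AV g => a.isRight) = 1

/-- Two monomials, each of degree one in `h`, are 1-differentially wed:
`m[h_i → x_i] = m̃[h_j → x_j]`, i.e. they agree after replacing the `h`-factor by the
corresponding `x`-factor. -/
def Wed1 {g : ℕ} (w w' : FreeMonoid (AV g)) : Prop :=
  OneH w ∧ OneH w' ∧
    (FreeMonoid.toList w).map flatA = (FreeMonoid.toList w').map flatA

/-- The nc directional derivative of a single nc analytic monomial (word) `l` in `x`:
the sum over positions `k` of the word with the `k`-th factor `x_i` replaced by `h_i`. -/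
noncomputable def derivWord {g : ℕ} (l : List (Fin g)) :
    MonoidAlgebra ℝ (FreeMonoid (AV g)) :=
  ∑ k : Fin l.length,
    MonoidAlgebra.single
      (FreeMonoid.ofList (List.ofFn fun i : Fin l.length =>
        if i = k then (Sum.inr (l.get i) : AV g) else Sum.inl (l.get i))) 1

/-- The nc directional derivative `f'(x)[h] = d/dt f(x+th)|_{t=0}` of an nc analytic
polynomial `f(x)`, extended linearly from monomials. -/
noncomputable def dirDerivM {g : ℕ} (f : MonoidAlgebra ℝ (FreeMonoid (Fin g))) :
    MonoidAlgebra ℝ (FreeMonoid (AV g)) :=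
  ∑ l ∈ f.coeff.support, f.coeff l • derivWord (FreeMonoid.toList l)

/-! ### Auxiliary machinery -/

/-- The word `l` with the `k`-th letter replaced by its `h`-marked version. -/
def wordAt {g : ℕ} (l : List (Fin g)) (k : Fin l.length) : List (AV g) :=
  List.ofFn fun i : Fin l.length =>
    if i = k then (Sum.inr (l.get i) : AV g) else Sum.inl (l.get i)

lemma countP_ofFn {α : Type*} (p : α → Bool) {n : ℕ} (f : Fin n → α) :
    (List.ofFn f).countP p = ∑ i : Fin n, if p (f i) then 1 else 0 := by
  induction n with
  | zero => simp
  | succ n ih =>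
    rw [List.ofFn_succ, List.countP_cons, Fin.sum_univ_succ, ih]
    by_cases h : p (f 0) <;> simp [h] <;> ring

lemma key {g : ℕ} (l : List (Fin g)) (w : List (AV g)) :
    (w.countP (fun a : AV g => a.isRight) = 1 ∧ w.map flatA = l) ↔
    ∃ k : Fin l.length, w = wordAt l k := by
  constructor
  · rintro ⟨h1, h2⟩
    have hlen : w.length = l.length := by rw [← h2, List.length_map]
    have hex : ∃ x ∈ w, (fun a : AV g => a.isRight) x = true := by
      rw [← List.countP_pos_iff]; omega
    have hn : w.findIdx (fun a : AV g => a.isRight) < w.length :=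
      List.findIdx_lt_length_of_exists hex
    set n := w.findIdx (fun a : AV g => a.isRight) with hndef
    have hatn : (w[n].isRight : Bool) = true := by
      simpa using List.findIdx_getElem (w := hn)
    have hdecomp : w = w.take n ++ w[n] :: w.drop (n+1) := by
      conv_lhs => rw [← List.take_append_drop n w]
      rw [List.getElem_cons_drop]
    have hdrop : (w.drop (n+1)).countP (fun a : AV g => a.isRight) = 0 := by
      have h1' := h1
      rw [hdecomp, List.countP_append, List.countP_cons] at h1'
      simp only [hatn, if_pos] at h1'
      omega
    have hiff : ∀ (j : ℕ) (hj : j < w.length), (w[j].isRight = true) ↔ j = n := by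
      intro j hj
      constructor
      · intro hright
        by_contra hne
        rcases Nat.lt_or_ge j n with hlt | hge
        · have h0 := List.not_of_lt_findIdx (p := fun a : AV g => a.isRight) (xs := w) (i := j) hlt
          simp [hright] at h0
        · have hgt : n + 1 ≤ j := by omega
          have hmem : w[j] ∈ w.drop (n+1) := by
            have he : (w.drop (n+1))[j - (n+1)]'(by simp; omega) = w[j] := by
              rw [List.getElem_drop]; congr 1; omega
            rw [← he]; exact List.getElem_mem _
          exact absurd hright (by simpa using (List.countP_eq_zero.mp hdrop) _ hmem)
      · rintro rfl; exact hatn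
    refine ⟨⟨n, hlen ▸ hn⟩, ?_⟩
    apply List.ext_getElem (by simp [wordAt, hlen])
    intro i hi hi'
    have hil : i < l.length := hlen ▸ hi
    have hflat : flatA w[i] = l[i]'hil := by
      have he : (w.map flatA)[i]'(by simpa using hi) = l[i]'hil := by
        simp only [h2]
      simpa using he
    have hrhs : (wordAt l ⟨n, hlen ▸ hn⟩)[i]'(hi') =
        if (⟨i, hil⟩ : Fin l.length) = ⟨n, hlen ▸ hn⟩
        then Sum.inr (l[i]'hil) else Sum.inl (l[i]'hil) := by
      simp [wordAt]
    rw [hrhs]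
    by_cases hcase : i = n
    · rw [if_pos (Fin.mk_eq_mk.mpr hcase)]
      rcases hw : w[i] with a | a
      · exfalso
        have h' := (hiff i hi).mpr hcase
        rw [hw] at h'; simp at h'
      · rw [hw] at hflat
        simp only [flatA, Sum.elim_inr, id] at hflat
        rw [hflat]
    · rw [if_neg (fun h => hcase (Fin.mk_eq_mk.mp h))]
      rcases hw : w[i] with a | a
      · rw [hw] at hflat
        simp only [flatA, Sum.elim_inl, id] at hflat
        rw [hflat]
      · exfalso
        exact hcase ((hiff i hi).mp (by rw [hw]; rfl))
  · rintro ⟨k, rfl⟩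
    constructor
    · rw [wordAt, countP_ofFn]
      have he : ∀ i : Fin l.length,
          (if (fun a : AV g => a.isRight) (if i = k then (Sum.inr (l.get i) : AV g) else Sum.inl (l.get i)) = true then 1 else 0)
          = if i = k then 1 else 0 := by
        intro i; by_cases h : i = k <;> simp [h]
      rw [Finset.sum_congr rfl (fun i _ => he i)]
      simp
    · rw [wordAt, List.map_ofFn]
      have he : (flatA ∘ fun i : Fin l.length =>
          if i = k then (Sum.inr (l.get i) : AV g) else Sum.inl (l.get i)) = l.get := by
        funext i; by_cases h : i = k <;> simp [h, flatA]
      rw [he, List.ofFn_get]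

lemma derivWord_eq {g : ℕ} (l : List (Fin g)) :
    derivWord l = ∑ k : Fin l.length, MonoidAlgebra.single (FreeMonoid.ofList (wordAt l k)) 1 := rfl

lemma wordAt_inj {g : ℕ} (l : List (Fin g)) {k k' : Fin l.length}
    (h : wordAt l k = wordAt l k') : k = k' := by
  by_contra hne
  have hlt : (k:ℕ) < (wordAt l k).length := by simp [wordAt]
  have hlt' : (k:ℕ) < (wordAt l k').length := by simp [wordAt]
  have h2 : (wordAt l k)[(k:ℕ)]'hlt = (wordAt l k')[(k:ℕ)]'hlt' := List.getElem_of_eq h hlt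
  simp only [wordAt] at h2
  rw [List.getElem_ofFn, List.getElem_ofFn] at h2
  simp only [Fin.eta] at h2
  rw [if_pos trivial, if_neg hne] at h2
  simp at h2

lemma derivWord_apply {g : ℕ} (l : List (Fin g)) (w : FreeMonoid (AV g)) :
    (derivWord l).coeff w = if (∃ k : Fin l.length, FreeMonoid.toList w = wordAt l k) then (1:ℝ) else 0 := by
  classical
  rw [derivWord_eq, MonoidAlgebra.coeff_sum, Finsupp.finset_sum_apply]
  by_cases hex : ∃ k : Fin l.length, FreeMonoid.toList w = wordAt l k
  · obtain ⟨k₀, hk₀⟩ := hex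
    rw [if_pos ⟨k₀, hk₀⟩]
    have hterm : ∀ k : Fin l.length,
        (MonoidAlgebra.single (FreeMonoid.ofList (wordAt l k)) (1:ℝ)).coeff w
          = if k = k₀ then 1 else 0 := by
      intro k
      rw [MonoidAlgebra.single_apply]
      by_cases hk : k = k₀
      · subst hk
        rw [if_pos rfl, if_pos (by rw [← hk₀, FreeMonoid.ofList_toList])]
      · rw [if_neg hk, if_neg]
        intro hcon
        apply hk
        apply wordAt_inj l
        have h3 := congrArg FreeMonoid.toList hcon
        rw [FreeMonoid.toList_ofList, hk₀] at h3
        exact h3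
    rw [Finset.sum_congr rfl (fun k _ => hterm k), Finset.sum_ite_eq' Finset.univ k₀ (fun _ => (1:ℝ))]
    simp
  · rw [if_neg hex]
    apply Finset.sum_eq_zero
    intro k _
    rw [MonoidAlgebra.single_apply, if_neg]
    intro hcon
    exact hex ⟨k, by rw [← hcon, FreeMonoid.toList_ofList]⟩

lemma derivWord_apply' {g : ℕ} (l : List (Fin g)) (w : FreeMonoid (AV g)) :
    (derivWord l).coeff w = if (OneH w ∧ (FreeMonoid.toList w).map flatA = l) then (1:ℝ) else 0 := by
  rw [derivWord_apply]
  congr 1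
  rw [eq_iff_iff, ← key l (FreeMonoid.toList w)]
  rfl

lemma dirDerivM_apply {g : ℕ} (f : MonoidAlgebra ℝ (FreeMonoid (Fin g)))
    (w : FreeMonoid (AV g)) :
    (dirDerivM f).coeff w = if OneH w
      then f.coeff (FreeMonoid.ofList ((FreeMonoid.toList w).map flatA)) else 0 := by
  classical
  rw [dirDerivM, MonoidAlgebra.coeff_sum, Finsupp.finset_sum_apply]
  have hterm : ∀ l ∈ f.coeff.support, (f.coeff l • derivWord (FreeMonoid.toList l)).coeff w
      = f.coeff l * (if (OneH w ∧ (FreeMonoid.toList w).map flatA = FreeMonoid.toList l) then 1 else 0) := by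
    intro l _
    rw [MonoidAlgebra.coeff_smul_apply, derivWord_apply', smul_eq_mul]
  rw [Finset.sum_congr rfl hterm]
  by_cases hone : OneH w
  · rw [if_pos hone]
    have hterm2 : ∀ l ∈ f.coeff.support,
        f.coeff l * (if (OneH w ∧ (FreeMonoid.toList w).map flatA = FreeMonoid.toList l) then (1:ℝ) else 0)
        = if l = FreeMonoid.ofList ((FreeMonoid.toList w).map flatA) then f.coeff l else 0 := by
      intro l _
      by_cases hc : l = FreeMonoid.ofList ((FreeMonoid.toList w).map flatA)
      · rw [if_pos hc, if_pos ⟨hone, by rw [hc, FreeMonoid.toList_ofList]⟩, mul_one]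
      · rw [if_neg hc, if_neg, mul_zero]
        rintro ⟨-, hm⟩
        exact hc (by rw [hm, FreeMonoid.ofList_toList])
    rw [Finset.sum_congr rfl hterm2, Finset.sum_ite_eq' f.coeff.support _ (fun l => f.coeff l)]
    by_cases hmem : FreeMonoid.ofList ((FreeMonoid.toList w).map flatA) ∈ f.coeff.support
    · rw [if_pos hmem]
    · rw [if_neg hmem, eq_comm]
      exact Finsupp.notMem_support_iff.mp hmem
  · rw [if_neg hone]
    apply Finset.sum_eq_zero
    intro l _
    rw [if_neg (fun h => hone h.1), mul_zero]

/-- The canonical representative: put the `h` on the first letter. -/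
def hWord {g : ℕ} : List (Fin g) → List (AV g)
  | [] => []
  | a :: r => Sum.inr a :: r.map Sum.inl

lemma hWord_inj {g : ℕ} : Function.Injective (hWord (g := g)) := by
  intro l l' h
  match l, l' with
  | [], [] => rfl
  | [], a :: r => simp [hWord] at h
  | a :: r, [] => simp [hWord] at h
  | a :: r, a' :: r' =>
    simp only [hWord, List.cons.injEq, Sum.inr.injEq] at h
    obtain ⟨rfl, h2⟩ := h
    rw [List.map_injective_iff.mpr Sum.inl_injective h2]

/-- a polynomial `p` in `x, h` is the nc directional derivative of some
nc analytic polynomial iff every monomial of `p` has degree exactly one in `h` and,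
whenever a monomial occurs in `p`, every monomial 1-differentially wed to it also
occurs in `p` with the same coefficient. -/
theorem isDirectionalDerivative_iff {g : ℕ}
    (p : MonoidAlgebra ℝ (FreeMonoid (AV g))) :
    (∃ f : MonoidAlgebra ℝ (FreeMonoid (Fin g)), p = dirDerivM f)
      ↔ ((∀ w ∈ p.coeff.support, OneH w) ∧
          (∀ w ∈ p.coeff.support, ∀ w', Wed1 w w' → p.coeff w' = p.coeff w)) := by
  constructor
  · rintro ⟨f, rfl⟩
    constructor
    · intro w hw
      by_contra hone
      exact Finsupp.mem_support_iff.mp hw (by rw [dirDerivM_apply, if_neg hone])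
    · rintro w hw w' ⟨h1, h2, h3⟩
      rw [dirDerivM_apply, dirDerivM_apply, if_pos h1, if_pos h2, h3]
  · rintro ⟨H1, H2⟩
    set F : FreeMonoid (Fin g) → FreeMonoid (AV g) :=
      fun l => FreeMonoid.ofList (hWord (FreeMonoid.toList l)) with hFdef
    have hFinj : Function.Injective F := by
      intro a b h
      apply FreeMonoid.toList.injective
      apply hWord_inj
      have := congrArg FreeMonoid.toList h
      simpa only [hFdef, FreeMonoid.toList_ofList] using this
    refine ⟨MonoidAlgebra.ofCoeff (Finsupp.comapDomain F p.coeff (hFinj.injOn)), ?_⟩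
    refine MonoidAlgebra.coeff_injective (Finsupp.ext fun w => ?_)
    rw [dirDerivM_apply]
    by_cases hone : OneH w
    · rw [if_pos hone]
      rw [MonoidAlgebra.coeff_ofCoeff, Finsupp.comapDomain_apply]
      set c : List (Fin g) := (FreeMonoid.toList w).map flatA with hc
      have hF : F (FreeMonoid.ofList c) = FreeMonoid.ofList (hWord c) := by
        simp only [hFdef, FreeMonoid.toList_ofList]
      rw [hF]
      have hne : c ≠ [] := by
        intro h0
        have h1 : FreeMonoid.toList w = [] := List.map_eq_nil_iff.mp (hc ▸ h0)
        have := hone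
        rw [OneH, h1] at this
        simp at this
      obtain ⟨a, r, hcr⟩ : ∃ a r, c = a :: r := by
        cases hcc : c with
        | nil => exact absurd hcc hne
        | cons a r => exact ⟨a, r, rfl⟩
      have hwed : Wed1 w (FreeMonoid.ofList (hWord c)) := by
        refine ⟨hone, ?_, ?_⟩
        · rw [OneH, FreeMonoid.toList_ofList, hcr, hWord]
          simp [List.countP_cons, List.countP_map, List.countP_eq_zero]
        · rw [FreeMonoid.toList_ofList, hcr, hWord, ← hc, hcr]
          simp [flatA, List.map_map]
      by_cases hmem : FreeMonoid.ofList (hWord c) ∈ p.coeff.support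
      · exact H2 _ hmem w ⟨hwed.2.1, hwed.1, hwed.2.2.symm⟩
      · have h0 : p.coeff (FreeMonoid.ofList (hWord c)) = 0 := Finsupp.notMem_support_iff.mp hmem
        rw [h0]
        by_contra hpw
        have hws : w ∈ p.coeff.support := Finsupp.mem_support_iff.mpr hpw
        exact hpw ((H2 w hws _ hwed).symm.trans h0)
    · rw [if_neg hone]
      by_contra hpw
      exact hone (H1 w (Finsupp.mem_support_iff.mpr hpw))
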